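/- For N ≥ 1, let λ_i = i/(2N+1−i) for i = 1,…,N, and let S₀ be the (N+1)×(N+1) symmetric tridiagonal matrix with diagonal entries (2λ₁, 2λ₂, …, 2λ_N, 1) and off-diagonal entries S₀[i, i+1] = −λ_i for i = 1,…,N. Then S₀ is positive definite. -/

import Mathlib

/-- λ_i = i/(2N+1−i). -/
noncomputable def lamS (N i : ℕ) : ℝ := (i : ℝ) / (2 * N + 1 - i)

/-- The (N+1)×(N+1) symmetric tridiagonal matrix S₀ with diagonal
(2λ₁,…,2λ_N,1) and off-diagonal entries −λ₁,…,−λ_N. -/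
noncomputable def S0mat (N : ℕ) : Matrix (Fin (N + 1)) (Fin (N + 1)) ℝ :=
  Matrix.of fun i j =>
    if i = j then (if (i : ℕ) = N then 1 else 2 * lamS N (i + 1))
    else if (i : ℕ) + 1 = (j : ℕ) then - lamS N (i + 1)
    else if (j : ℕ) + 1 = (i : ℕ) then - lamS N (j + 1)
    else 0

open Finset Matrix

private lemma lamS_zero (N : ℕ) : lamS N 0 = 0 := by simp [lamS]

private lemma lamS_nonneg (N m : ℕ) (hm : m ≤ N + 1) : 0 ≤ lamS N m := by
  unfold lamS
  apply div_nonneg (by positivity)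
  have h1 : (m : ℝ) ≤ (N : ℝ) + 1 := by exact_mod_cast hm
  have h2 : (0 : ℝ) ≤ N := Nat.cast_nonneg N
  linarith

private lemma lamS_lt (N : ℕ) {i : ℕ} (h : i < N) : lamS N i < lamS N (i + 1) := by
  unfold lamS
  have hi : (i : ℝ) < N := by exact_mod_cast h
  have hN0 : (0 : ℝ) ≤ N := Nat.cast_nonneg N
  rw [div_lt_div_iff₀ (by push_cast; linarith) (by push_cast; linarith)]
  push_cast
  nlinarith

private lemma lamS_last (N : ℕ) : lamS N N < 1 := by
  unfold lamS
  have hN0 : (0 : ℝ) ≤ N := Nat.cast_nonneg N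
  rw [div_lt_one (by linarith)]
  linarith

/-- The key algebraic identity for the quadratic form. -/
private lemma key_identity (l z : ℕ → ℝ) (h0 : l 0 = 0) : ∀ n : ℕ,
    ((∑ i ∈ range n, 2 * l (i + 1) * z i ^ 2) + z n ^ 2)
      + 2 * (∑ i ∈ range n, -(l (i + 1)) * (z i * z (i + 1)))
    = (∑ k ∈ range n, l (k + 1) * (z k - z (k + 1)) ^ 2)
      + ((∑ i ∈ range n, (l (i + 1) - l i) * z i ^ 2) + (1 - l n) * z n ^ 2) := by
  intro n
  induction n with
  | zero => simp [h0]
  | succ n ih =>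
      rw [sum_range_succ, sum_range_succ, sum_range_succ, sum_range_succ]
      linear_combination ih

/-- Natural-number version of the entries of `S0mat`. -/
noncomputable def sEnt (N i j : ℕ) : ℝ :=
  if i = j then (if i = N then 1 else 2 * lamS N (i + 1))
  else if i + 1 = j then - lamS N (i + 1)
  else if j + 1 = i then - lamS N (j + 1)
  else 0

private lemma sEnt_split (N i j : ℕ) (y : ℕ → ℝ) :
    y i * (sEnt N i j * y j)
    = (if i = j then (if i = N then 1 else 2 * lamS N (i + 1)) * (y i * y j) else 0)
      + (if i + 1 = j then -(lamS N (i + 1)) * (y i * y j) else 0)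
      + (if j + 1 = i then -(lamS N (j + 1)) * (y i * y j) else 0) := by
  unfold sEnt
  split_ifs <;> first | omega | ring

private lemma sum_eval (N : ℕ) (y : ℕ → ℝ) :
    ∑ i ∈ range (N + 1), y i * ∑ j ∈ range (N + 1), sEnt N i j * y j
    = ((∑ i ∈ range N, 2 * lamS N (i + 1) * y i ^ 2) + y N ^ 2)
      + 2 * (∑ i ∈ range N, -(lamS N (i + 1)) * (y i * y (i + 1))) := by
  have hsplit : ∑ i ∈ range (N + 1), y i * ∑ j ∈ range (N + 1), sEnt N i j * y j
      = (∑ i ∈ range (N + 1), ∑ j ∈ range (N + 1),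
          (if i = j then (if i = N then 1 else 2 * lamS N (i + 1)) * (y i * y j) else 0))
        + ((∑ i ∈ range (N + 1), ∑ j ∈ range (N + 1),
            (if i + 1 = j then -(lamS N (i + 1)) * (y i * y j) else 0))
          + (∑ i ∈ range (N + 1), ∑ j ∈ range (N + 1),
            (if j + 1 = i then -(lamS N (j + 1)) * (y i * y j) else 0))) := by
    rw [← sum_add_distrib, ← sum_add_distrib]
    apply sum_congr rfl
    intro i _
    rw [mul_sum, ← sum_add_distrib, ← sum_add_distrib]
    apply sum_congr rfl
    intro j _
    rw [sEnt_split]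
    ring
  rw [hsplit]
  -- T1
  have hT1 : (∑ i ∈ range (N + 1), ∑ j ∈ range (N + 1),
      (if i = j then (if i = N then 1 else 2 * lamS N (i + 1)) * (y i * y j) else 0))
      = (∑ i ∈ range N, 2 * lamS N (i + 1) * y i ^ 2) + y N ^ 2 := by
    have h1 : ∀ i ∈ range (N + 1), (∑ j ∈ range (N + 1),
        (if i = j then (if i = N then 1 else 2 * lamS N (i + 1)) * (y i * y j) else 0))
        = (if i = N then 1 else 2 * lamS N (i + 1)) * (y i * y i) := by
      intro i hi
      rw [Finset.sum_ite_eq]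
      simp only [hi, if_true]
    rw [sum_congr rfl h1, sum_range_succ, if_pos rfl]
    have h2 : ∀ i ∈ range N, (if i = N then (1:ℝ) else 2 * lamS N (i + 1)) * (y i * y i)
        = 2 * lamS N (i + 1) * y i ^ 2 := by
      intro i hi
      rw [if_neg (by simp at hi; omega)]
      ring
    rw [sum_congr rfl h2]
    ring
  -- T2
  have hT2 : (∑ i ∈ range (N + 1), ∑ j ∈ range (N + 1),
      (if i + 1 = j then -(lamS N (i + 1)) * (y i * y j) else 0))
      = ∑ i ∈ range N, -(lamS N (i + 1)) * (y i * y (i + 1)) := by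
    have h1 : ∀ i ∈ range (N + 1), (∑ j ∈ range (N + 1),
        (if i + 1 = j then -(lamS N (i + 1)) * (y i * y j) else 0))
        = (if i + 1 ∈ range (N + 1) then -(lamS N (i + 1)) * (y i * y (i + 1)) else 0) := by
      intro i _
      rw [Finset.sum_ite_eq]
    rw [sum_congr rfl h1, sum_range_succ, if_neg (by simp)]
    have h2 : ∀ i ∈ range N,
        (if i + 1 ∈ range (N + 1) then -(lamS N (i + 1)) * (y i * y (i + 1)) else 0)
        = -(lamS N (i + 1)) * (y i * y (i + 1)) := by
      intro i hi
      rw [if_pos (by simp at hi ⊢; omega)]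
    rw [sum_congr rfl h2]
    ring
  -- T3
  have hT3 : (∑ i ∈ range (N + 1), ∑ j ∈ range (N + 1),
      (if j + 1 = i then -(lamS N (j + 1)) * (y i * y j) else 0))
      = ∑ i ∈ range N, -(lamS N (i + 1)) * (y i * y (i + 1)) := by
    rw [Finset.sum_comm]
    have h1 : ∀ j ∈ range (N + 1), (∑ i ∈ range (N + 1),
        (if j + 1 = i then -(lamS N (j + 1)) * (y i * y j) else 0))
        = (if j + 1 ∈ range (N + 1) then -(lamS N (j + 1)) * (y (j + 1) * y j) else 0) := by
      intro j _
      rw [Finset.sum_ite_eq]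
    rw [sum_congr rfl h1, sum_range_succ, if_neg (by simp)]
    have h2 : ∀ j ∈ range N,
        (if j + 1 ∈ range (N + 1) then -(lamS N (j + 1)) * (y (j + 1) * y j) else 0)
        = -(lamS N (j + 1)) * (y j * y (j + 1)) := by
      intro j hj
      rw [if_pos (by simp at hj ⊢; omega)]
      ring
    rw [sum_congr rfl h2, add_zero]
  rw [hT1, hT2, hT3]
  ring

private lemma S0mat_eq_sEnt (N : ℕ) (i j : Fin (N + 1)) :
    S0mat N i j = sEnt N (i : ℕ) (j : ℕ) := by
  simp only [S0mat, sEnt, Matrix.of_apply, Fin.ext_iff]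

theorem S0_posDef (N : ℕ) (hN : 1 ≤ N) : (S0mat N).PosDef := by
  rw [Matrix.posDef_iff_dotProduct_mulVec]
  constructor
  · -- Hermitian
    ext i j
    simp only [Matrix.conjTranspose_apply, star_trivial, S0mat_eq_sEnt, sEnt]
    split_ifs <;> first | rfl | omega | (simp_all; omega) | simp_all
  · intro x hx
    -- extend x to a function on ℕ
    set y : ℕ → ℝ := fun n => if h : n < N + 1 then x ⟨n, h⟩ else 0 with hy
    have hyx : ∀ i : Fin (N + 1), y (i : ℕ) = x i := by
      intro i
      simp only [hy, dif_pos i.isLt]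
    have hQ : star x ⬝ᵥ (S0mat N *ᵥ x)
        = ∑ i ∈ range (N + 1), y i * ∑ j ∈ range (N + 1), sEnt N i j * y j := by
      have hinner : ∀ i : Fin (N + 1),
          (S0mat N *ᵥ x) i = ∑ j ∈ range (N + 1), sEnt N (i : ℕ) j * y j := by
        intro i
        rw [← Fin.sum_univ_eq_sum_range (fun j => sEnt N (i : ℕ) j * y j) (N + 1)]
        simp only [Matrix.mulVec, dotProduct]
        exact Finset.sum_congr rfl fun j _ => by rw [S0mat_eq_sEnt, hyx]
      calc star x ⬝ᵥ (S0mat N *ᵥ x)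
          = ∑ i : Fin (N + 1), x i * (S0mat N *ᵥ x) i := by
            simp [dotProduct]
        _ = ∑ i : Fin (N + 1),
              (fun n => y n * ∑ j ∈ range (N + 1), sEnt N n j * y j) (i : ℕ) := by
            exact Finset.sum_congr rfl fun i _ => by rw [hinner, ← hyx]
        _ = ∑ i ∈ range (N + 1), y i * ∑ j ∈ range (N + 1), sEnt N i j * y j :=
            Fin.sum_univ_eq_sum_range
              (fun n => y n * ∑ j ∈ range (N + 1), sEnt N n j * y j) (N + 1)
    rw [hQ, sum_eval, key_identity (lamS N) y (lamS_zero N) N]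
    -- second summand rewritten as a single sum
    have hB : (∑ i ∈ range N, (lamS N (i + 1) - lamS N i) * y i ^ 2)
        + (1 - lamS N N) * y N ^ 2
        = ∑ i ∈ range (N + 1),
            (if i = N then 1 - lamS N N else lamS N (i + 1) - lamS N i) * y i ^ 2 := by
      rw [sum_range_succ, if_pos rfl]
      congr 1
      exact (sum_congr rfl fun i hi => by rw [if_neg (by simp at hi; omega)]).symm
    rw [hB]
    have hA : 0 ≤ ∑ k ∈ range N, lamS N (k + 1) * (y k - y (k + 1)) ^ 2 := by
      apply sum_nonneg
      intro k hk
      simp only [mem_range] at hk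
      exact mul_nonneg (lamS_nonneg N (k + 1) (by omega)) (sq_nonneg _)
    have hcoef : ∀ i ∈ range (N + 1),
        0 < (if i = N then 1 - lamS N N else lamS N (i + 1) - lamS N i) := by
      intro i hi
      simp only [mem_range] at hi
      split_ifs with h
      · linarith [lamS_last N]
      · have : i < N := by omega
        linarith [lamS_lt N this]
    have hB' : 0 < ∑ i ∈ range (N + 1),
        (if i = N then 1 - lamS N N else lamS N (i + 1) - lamS N i) * y i ^ 2 := by
      obtain ⟨i₀, hi₀⟩ := Function.ne_iff.mp hx
      apply Finset.sum_pos'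
      · intro i hi
        exact mul_nonneg (le_of_lt (hcoef i hi)) (sq_nonneg _)
      · refine ⟨(i₀ : ℕ), mem_range.mpr i₀.isLt, ?_⟩
        apply mul_pos (hcoef _ (mem_range.mpr i₀.isLt))
        have hne : y (i₀ : ℕ) ≠ 0 := by
          rw [hyx]
          simpa using hi₀
        exact lt_of_le_of_ne (sq_nonneg _) (Ne.symm (pow_ne_zero 2 hne))
    linarith
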